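/- Fix k ≥ 2, μ > 0, σ > 0 and class priors p_1, …, p_k > 0 with Σ_{c=1}^k p_c = 1. Let m be an index with p_m = min_c p_c. Set snr = μ²/σ², α_c = μ p_c/(μ² p_c + σ²) for each c, and t* = α_m. Define α_c^{GF}(t) = α_c (1 − exp(−(σ² + p_c μ²) t)) and α_c^{Spec}(t) = min(t, α_c). For a trajectory α = (α_1(·), …, α_k(·)) define the per-class loss L_c(α, t) = ½ (1 − μ α_c(t))² + ½ σ² Σ_{j=1}^k α_j(t)², and the balanced loss L_bal(α, t) = (1/k) Σ_{c=1}^k L_c(α, t). Assume μ ≥ 1, p_m ≤ 1/(3·snr + 4k), and p_m ≤ (k − 2μ)/(2μ·snr + k·snr + 2k²). Then for every t ∈ (0, t*], L_bal(α^{GF}, t) − L_bal(α^{Spec}, t) ≥ μ t / 2. -/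

import Mathlib

/-- Gradient-flow trajectory of the spectral component with prior `pc`:
`α_c^{GF}(t) = α_c (1 − exp(−(σ² + p_c μ²) t))` with `α_c = μ p_c/(μ² p_c + σ²)`. -/
noncomputable def alphaGF (μ σ pc t : ℝ) : ℝ :=
  (μ * pc / (μ ^ 2 * pc + σ ^ 2)) * (1 - Real.exp (-(σ ^ 2 + pc * μ ^ 2) * t))

/-- Spectral-gradient-flow trajectory of the spectral component with prior `pc`:
`α_c^{Spec}(t) = min(t, α_c)` with `α_c = μ p_c/(μ² p_c + σ²)`. -/
noncomputable def alphaSpec (μ σ pc t : ℝ) : ℝ :=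
  min t (μ * pc / (μ ^ 2 * pc + σ ^ 2))

/-- Per-class population loss of a trajectory `α`:
`L_c(α, t) = ½ (1 − μ α_c(t))² + ½ σ² Σ_j α_j(t)²`. -/
noncomputable def classLoss {k : ℕ} (μ σ : ℝ) (α : Fin k → ℝ → ℝ) (c : Fin k) (t : ℝ) : ℝ :=
  (1 / 2) * (1 - μ * α c t) ^ 2 + (1 / 2) * σ ^ 2 * ∑ j, (α j t) ^ 2

/-- Balanced population loss: `L_bal(α, t) = (1/k) Σ_c L_c(α, t)`. -/
noncomputable def balancedLoss {k : ℕ} (μ σ : ℝ) (α : Fin k → ℝ → ℝ) (t : ℝ) : ℝ :=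
  (1 / (k : ℝ)) * ∑ c, classLoss μ σ α c t

/-- balanced-loss part of Theorem 1, full version. Under the class-imbalanced
data model, if `μ ≥ 1`, `p_m ≤ 1/(3·snr + 4k)` and
`p_m ≤ (k − 2μ)/(2μ·snr + k·snr + 2k²)`, then for every `t ∈ (0, t*]` with `t* = α_m`,
the balanced loss of gradient flow exceeds that of spectral gradient flow by at least
`μ t / 2`. -/
private lemma stmt7_key (kk μ σ t G S : ℝ) (hμ : 0 < μ) (hσ2 : 0 < σ ^ 2) (hk0 : 0 < kk)
    (ht : 0 < t) (hGle : G ≤ μ * t) (hS0 : 0 ≤ S)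
    (hbound : kk * (μ ^ 2 + kk * σ ^ 2) * t ≤ μ * (kk - 2 * μ)) :
    (1/2 : ℝ) * (kk - 2 * μ * G + μ ^ 2 * S) + kk * ((1/2) * σ ^ 2 * S)
      ≥ kk * (μ * t / 2 + ((1/2) * (1 - μ * t) ^ 2 + (1/2) * σ ^ 2 * (kk * t ^ 2))) := by
  linarith [mul_le_mul_of_nonneg_left hGle hμ.le, mul_nonneg (sq_nonneg μ) hS0,
    mul_nonneg (mul_nonneg hk0.le hσ2.le) hS0, mul_le_mul_of_nonneg_left hbound ht.le]

theorem stmt7 (k : ℕ) (hk : 2 ≤ k) (μ σ : ℝ) (hμ : 0 < μ) (hσ : 0 < σ)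
    (p : Fin k → ℝ) (hp : ∀ c, 0 < p c) (hsum : ∑ c, p c = 1)
    (m : Fin k) (hm : ∀ c, p m ≤ p c)
    (snr : ℝ) (hsnr : snr = μ ^ 2 / σ ^ 2)
    (tstar : ℝ) (htstar : tstar = μ * p m / (μ ^ 2 * p m + σ ^ 2))
    (hμ1 : 1 ≤ μ)
    (hpm : p m ≤ 1 / (3 * snr + 4 * k))
    (hpm2 : p m ≤ ((k : ℝ) - 2 * μ) / (2 * μ * snr + k * snr + 2 * (k : ℝ) ^ 2)) :
    ∀ t : ℝ, 0 < t → t ≤ tstar →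
      balancedLoss μ σ (fun c => alphaGF μ σ (p c)) t
          - balancedLoss μ σ (fun c => alphaSpec μ σ (p c)) t ≥ μ * t / 2 := by
  intro t ht htle
  have hσ2 : (0:ℝ) < σ ^ 2 := by positivity
  have hk0 : (0:ℝ) < (k:ℝ) := by exact_mod_cast Nat.lt_of_lt_of_le (by norm_num) hk
  have hdenom : ∀ c : Fin k, 0 < μ ^ 2 * p c + σ ^ 2 := fun c =>
    add_pos_of_nonneg_of_pos (mul_nonneg (sq_nonneg μ) (hp c).le) hσ2
  have hAm : ∀ c : Fin k, μ * p m / (μ ^ 2 * p m + σ ^ 2) ≤ μ * p c / (μ ^ 2 * p c + σ ^ 2) := by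
    intro c
    rw [div_le_div_iff₀ (hdenom m) (hdenom c)]
    nlinarith [mul_nonneg (mul_nonneg hμ.le hσ2.le) (sub_nonneg.2 (hm c))]
  have htA : ∀ c : Fin k, t ≤ μ * p c / (μ ^ 2 * p c + σ ^ 2) := fun c =>
    htle.trans (htstar ▸ hAm c)
  have hspec : ∀ c : Fin k, alphaSpec μ σ (p c) t = t := fun c => min_eq_left (htA c)
  obtain ⟨g, hgdef⟩ : ∃ g : Fin k → ℝ, ∀ c, g c = alphaGF μ σ (p c) t :=
    ⟨fun c => alphaGF μ σ (p c) t, fun _ => rfl⟩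
  have hg0 : ∀ c, 0 ≤ g c := by
    intro c
    rw [hgdef, alphaGF]
    apply mul_nonneg (div_nonneg (mul_nonneg hμ.le (hp c).le) (hdenom c).le)
    have : Real.exp (-(σ ^ 2 + p c * μ ^ 2) * t) ≤ 1 := by
      rw [Real.exp_le_one_iff]
      nlinarith [mul_pos hσ2 ht, mul_nonneg (mul_nonneg (hp c).le (sq_nonneg μ)) ht.le]
    linarith
  have hgle : ∀ c, g c ≤ μ * p c * t := by
    intro c
    have hx : 1 - Real.exp (-(σ ^ 2 + p c * μ ^ 2) * t) ≤ (σ ^ 2 + p c * μ ^ 2) * t := by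
      have h := Real.add_one_le_exp (-(σ ^ 2 + p c * μ ^ 2) * t)
      linarith
    have hA0 : 0 ≤ μ * p c / (μ ^ 2 * p c + σ ^ 2) :=
      div_nonneg (mul_nonneg hμ.le (hp c).le) (hdenom c).le
    rw [hgdef, alphaGF]
    calc (μ * p c / (μ ^ 2 * p c + σ ^ 2)) * (1 - Real.exp (-(σ ^ 2 + p c * μ ^ 2) * t))
        ≤ (μ * p c / (μ ^ 2 * p c + σ ^ 2)) * ((σ ^ 2 + p c * μ ^ 2) * t) :=
          mul_le_mul_of_nonneg_left hx hA0
      _ = μ * p c * t := by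
          field_simp [(hdenom c).ne']
          ring
  obtain ⟨G, S, hGdef, hSdef⟩ : ∃ G S : ℝ, G = ∑ c, g c ∧ S = ∑ c, (g c) ^ 2 :=
    ⟨_, _, rfl, rfl⟩
  have hGle : G ≤ μ * t := by
    rw [hGdef]
    calc ∑ c, g c ≤ ∑ c, μ * p c * t := Finset.sum_le_sum fun c _ => hgle c
      _ = μ * t := by
          rw [← Finset.sum_mul, ← Finset.mul_sum, hsum, mul_one]
  have hS0 : 0 ≤ S := hSdef ▸ Finset.sum_nonneg fun c _ => sq_nonneg _
  have hD0 : (0:ℝ) < 2 * μ * snr + k * snr + 2 * (k:ℝ) ^ 2 := by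
    have : 0 < snr := by rw [hsnr]; positivity
    nlinarith
  have hpmD : p m * (2 * μ * snr + k * snr + 2 * (k:ℝ) ^ 2) ≤ (k:ℝ) - 2 * μ :=
    (le_div_iff₀ hD0).mp hpm2
  have hpmσ : p m * (2 * μ * μ ^ 2 + (k:ℝ) * μ ^ 2 + 2 * (k:ℝ) ^ 2 * σ ^ 2) ≤ σ ^ 2 * ((k:ℝ) - 2 * μ) := by
    have h := mul_le_mul_of_nonneg_left hpmD hσ2.le
    rw [hsnr] at h
    have e : σ ^ 2 * (p m * (2 * μ * (μ ^ 2 / σ ^ 2) + (k:ℝ) * (μ ^ 2 / σ ^ 2) + 2 * (k:ℝ) ^ 2))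
        = p m * (2 * μ * μ ^ 2 + (k:ℝ) * μ ^ 2 + 2 * (k:ℝ) ^ 2 * σ ^ 2) := by
      field_simp
    linarith [e ▸ h]
  have htσ : t * σ ^ 2 ≤ μ * p m := by
    have h1 : tstar ≤ μ * p m / σ ^ 2 := by
      rw [htstar, div_le_div_iff₀ (hdenom m) hσ2]
      nlinarith [mul_nonneg (mul_nonneg hμ.le (hp m).le) (mul_nonneg (sq_nonneg μ) (hp m).le)]
    exact (le_div_iff₀ hσ2).mp (htle.trans h1)
  have hbound : (k:ℝ) * (μ ^ 2 + (k:ℝ) * σ ^ 2) * t ≤ μ * ((k:ℝ) - 2 * μ) := by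
    have h1 : (k:ℝ) * (μ ^ 2 + (k:ℝ) * σ ^ 2) * (t * σ ^ 2)
        ≤ (k:ℝ) * (μ ^ 2 + (k:ℝ) * σ ^ 2) * (μ * p m) := by
      apply mul_le_mul_of_nonneg_left htσ
      positivity
    have h2 : μ * (p m * (2 * μ * μ ^ 2 + (k:ℝ) * μ ^ 2 + 2 * (k:ℝ) ^ 2 * σ ^ 2))
        ≤ μ * (σ ^ 2 * ((k:ℝ) - 2 * μ)) :=
      mul_le_mul_of_nonneg_left hpmσ hμ.le
    have h3 : (k:ℝ) * (μ ^ 2 + (k:ℝ) * σ ^ 2) * (μ * p m)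
        ≤ μ * (p m * (2 * μ * μ ^ 2 + (k:ℝ) * μ ^ 2 + 2 * (k:ℝ) ^ 2 * σ ^ 2)) := by
      nlinarith [mul_nonneg (mul_nonneg (mul_nonneg (mul_nonneg hμ.le hμ.le) hμ.le) hμ.le) (hp m).le,
        mul_nonneg (mul_nonneg (mul_nonneg hk0.le hk0.le) hσ2.le) (mul_nonneg hμ.le (hp m).le)]
    have h4 : (k:ℝ) * (μ ^ 2 + (k:ℝ) * σ ^ 2) * t * σ ^ 2 ≤ μ * ((k:ℝ) - 2 * μ) * σ ^ 2 := by
      linarith [h1, h2, h3]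
    exact (mul_le_mul_iff_of_pos_right hσ2).mp h4
  have hL1 : balancedLoss μ σ (fun c => alphaGF μ σ (p c)) t
      = (1/(k:ℝ)) * ((1/2) * ((k:ℝ) - 2 * μ * G + μ ^ 2 * S) + (k:ℝ) * ((1/2) * σ ^ 2 * S)) := by
    simp only [balancedLoss, classLoss]
    congr 1
    have hge : ∀ c : Fin k, alphaGF μ σ (p c) t = g c := fun c => (hgdef c).symm
    simp only [hge]
    have e1 : ∀ c : Fin k, (1/2 : ℝ) * (1 - μ * g c) ^ 2 + 1/2 * σ ^ 2 * ∑ j, (g j) ^ 2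
        = ((1/2 : ℝ) - μ * g c + (1/2) * μ ^ 2 * (g c) ^ 2) + (1/2) * σ ^ 2 * S := by
      intro c; rw [← hSdef]; ring
    rw [Finset.sum_congr rfl fun c _ => e1 c, Finset.sum_add_distrib, Finset.sum_add_distrib,
      Finset.sum_sub_distrib, Finset.sum_const, Finset.sum_const, ← Finset.mul_sum,
      ← Finset.mul_sum, Finset.card_univ, Fintype.card_fin, ← hGdef, ← hSdef,
      nsmul_eq_mul, nsmul_eq_mul]
    ring
  have hL2 : balancedLoss μ σ (fun c => alphaSpec μ σ (p c)) t
      = (1/2) * (1 - μ * t) ^ 2 + (1/2) * σ ^ 2 * ((k:ℝ) * t ^ 2) := by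
    simp only [balancedLoss, classLoss, hspec]
    rw [Finset.sum_const, Finset.sum_const, Finset.card_univ, Fintype.card_fin,
      nsmul_eq_mul, nsmul_eq_mul]
    field_simp
  rw [hL1, hL2]
  have key := stmt7_key (k:ℝ) μ σ t G S hμ hσ2 hk0 ht hGle hS0 hbound
  have hrecip : (0:ℝ) < 1 / (k:ℝ) := by positivity
  have hfin := mul_le_mul_of_nonneg_left key hrecip.le
  rw [← mul_assoc, one_div_mul_cancel hk0.ne', one_mul] at hfin
  exact ge_iff_le.mpr (le_sub_iff_add_le.mpr hfin)
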